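/- Define ξ₀(r) = r - 2iη₀(1 - (1+r³)^{-1/6}) for r > 0, with 0 < η₀ < 1, and f(r) = 1/ξ₀'(r). Then for all r > 0: Re(f(r)²) ≥ (1/4)(1 - r⁴(1+r³)^{-7/3}) and Im(f(r)²) ≥ (η₀/2) r²(1+r³)^{-7/6}. -/

import Mathlib

open Real

lemma stmt4_aux (b : ℝ) :
    ((((1:ℂ) - b * Complex.I)⁻¹) ^ 2).re = (1 - b^2) / (1 + b^2)^2 ∧
    ((((1:ℂ) - b * Complex.I)⁻¹) ^ 2).im = 2 * b / (1 + b^2)^2 := by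
  have h : ((1:ℂ) - b * Complex.I)^2 =
      Complex.mk (1 - b^2) (-(2*b)) := by
    rw [Complex.ext_iff]
    constructor <;> simp [pow_two] <;> ring
  have hns : Complex.normSq (Complex.mk (1 - b^2) (-(2*b))) = (1 + b^2)^2 := by
    simp [Complex.normSq_apply]
    ring
  rw [inv_pow, h]
  constructor
  · rw [Complex.inv_re, hns]
  · rw [Complex.inv_im, hns]
    simp [neg_div]

theorem stmt4 (η₀ : ℝ) (hη₀ : 0 < η₀) (hη₁ : η₀ < 1) (r : ℝ) (hr : 0 < r) :
    let ξ₀ : ℝ → ℂ := fun t =>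
      (t : ℂ) - 2 * Complex.I * (η₀ : ℂ) * (((1 - (1 + t^3) ^ (-(1:ℝ)/6) : ℝ)) : ℂ)
    let f : ℝ → ℂ := fun t => 1 / deriv ξ₀ t
    (1/4) * (1 - r^4 * (1 + r^3) ^ (-(7:ℝ)/3)) ≤ ((f r)^2).re ∧
    (η₀/2) * r^2 * (1 + r^3) ^ (-(7:ℝ)/6) ≤ ((f r)^2).im := by
  intro ξ₀ f
  have hpos : (0:ℝ) < 1 + r^3 := by positivity
  set a : ℝ := r^2 * (1 + r^3) ^ (-(7:ℝ)/6) with ha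
  have ha0 : 0 ≤ a := by positivity
  -- a ≤ 1
  have ha1 : a ≤ 1 := by
    rw [ha]
    rcases le_total r 1 with h | h
    · have h1 : (1 + r^3) ^ (-(7:ℝ)/6) ≤ 1 :=
        Real.rpow_le_one_of_one_le_of_nonpos (by nlinarith) (by norm_num)
      nlinarith [Real.rpow_nonneg hpos.le (-(7:ℝ)/6)]
    · have h1 : (1 + r^3) ^ (-(7:ℝ)/6) ≤ (r^3) ^ (-(7:ℝ)/6) := by
        apply Real.antitoneOn_rpow_Ioi_of_exponent_nonpos (by norm_num)
        · exact Set.mem_Ioi.2 (by positivity)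
        · exact Set.mem_Ioi.2 (by positivity)
        · nlinarith
      have h2 : r^2 * (r^3) ^ (-(7:ℝ)/6) = r ^ (-(3:ℝ)/2) := by
        rw [← Real.rpow_natCast r 3, ← Real.rpow_natCast r 2,
          ← Real.rpow_mul hr.le, ← Real.rpow_add hr]
        norm_num
      have h3 : r ^ (-(3:ℝ)/2) ≤ 1 :=
        Real.rpow_le_one_of_one_le_of_nonpos h (by norm_num)
      nlinarith [Real.rpow_nonneg (show (0:ℝ) ≤ r^3 by positivity) (-(7:ℝ)/6)]
  -- derivative computation
  have h1 : HasDerivAt (fun t : ℝ => 1 + t^3) (3 * r^2) r := by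
    simpa using ((hasDerivAt_pow 3 r).const_add 1)
  have h2 : HasDerivAt (fun t : ℝ => (1 + t^3) ^ (-(1:ℝ)/6))
      (3 * r^2 * ((-(1:ℝ)/6)) * (1 + r^3) ^ ((-(1:ℝ)/6) - 1)) r :=
    h1.rpow_const (Or.inl hpos.ne')
  have h3 : HasDerivAt (fun t : ℝ => 1 - (1 + t^3) ^ (-(1:ℝ)/6))
      (-(3 * r^2 * ((-(1:ℝ)/6)) * (1 + r^3) ^ ((-(1:ℝ)/6) - 1))) r := h2.const_sub 1
  have h4 : HasDerivAt ξ₀ (1 - Complex.I * η₀ * a) r := by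
    have h5 := (Complex.ofRealCLM.hasDerivAt (x := r)).sub
      ((h3.ofReal_comp).const_mul (2 * Complex.I * (η₀ : ℂ)))
    convert h5 using 1
    case e'_4 => rfl
    case e'_8 => rfl
    have he : ((-(1:ℝ)/6) - 1) = (-(7:ℝ)/6) := by norm_num
    rw [he]
    simp only [Complex.ofRealCLM_apply, Complex.ofReal_one, ha]
    push_cast
    ring
  have hderiv : deriv ξ₀ r = 1 - Complex.I * η₀ * a := h4.deriv
  set b : ℝ := η₀ * a with hb
  have hb0 : 0 ≤ b := by positivity
  have hb1 : b ≤ a := by nlinarith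
  have hfr : f r = ((1:ℂ) - b * Complex.I)⁻¹ := by
    simp only [f, hderiv, one_div]
    congr 1
    rw [hb]
    push_cast
    ring
  obtain ⟨hre, him⟩ := stmt4_aux b
  rw [← hfr] at hre him
  have hb1' : b ≤ 1 := hb1.trans ha1
  have hdpos : (0:ℝ) < (1 + b^2)^2 := by positivity
  have hbsq : b^2 ≤ 1 := by nlinarith
  have hd4 : (1 + b^2)^2 ≤ 4 := by nlinarith
  have ha2 : r^4 * (1 + r^3) ^ (-(7:ℝ)/3) = a^2 := by
    rw [ha, mul_pow, ← Real.rpow_natCast ((1 + r^3) ^ (-(7:ℝ)/6)) 2,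
      ← Real.rpow_mul hpos.le]
    norm_num
    exact Or.inl (by ring)
  constructor
  · rw [hre, ha2, show (1:ℝ)/4 * (1 - a^2) = (1 - a^2)/4 from by ring,
      div_le_div_iff₀ (by norm_num : (0:ℝ) < 4) hdpos]
    have hab : b^2 ≤ a^2 := by nlinarith
    have h1a : (0:ℝ) ≤ 1 - a^2 := by nlinarith
    nlinarith [mul_le_mul_of_nonneg_left hd4 h1a]
  · rw [him]
    have hba : (η₀/2) * r^2 * (1 + r^3) ^ (-(7:ℝ)/6) = b / 2 := by rw [hb, ha]; ring
    rw [hba, div_le_div_iff₀ (by norm_num : (0:ℝ) < 2) hdpos]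
    nlinarith [mul_le_mul_of_nonneg_left hd4 hb0]
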